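/- Let c > 0 and p ∈ ℤ, and let u_n(t) = e^{−ct}(ct)^{n−p}/(n−p)! for n ≥ p, u_n(t) = 0 for n < p, be the solution of the upwind system u̇_n = −c(u_n − u_{n−1}) with u_n(0) = δ_{n,p}. Then for each integer j ≥ 1, sup_{t ≥ 0} |u_{p+j}(t)| = e^{−j} j^j / j!, and this quantity tends to 0 as j → ∞. Hence for every ε > 0 there exists an integer d, independent of t, such that |u_n(t)| < ε for all t ≥ 0 whenever |n − p| > d; i.e. the upwind discretization of the advection equation with positive wave speed is strongly local. -/

import Mathlib

open scoped Topology

private lemma key_bound (j : ℕ) (hj : 1 ≤ j) (s : ℝ) (hs : 0 ≤ s) :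
    Real.exp (-s) * s ^ j ≤ Real.exp (-(j : ℝ)) * (j : ℝ) ^ j := by
  have hjpos : (0 : ℝ) < j := by exact_mod_cast hj
  have h1 : s / j ≤ Real.exp (s / j - 1) := by
    have := Real.add_one_le_exp (s / j - 1)
    linarith
  have h2 : s ≤ j * Real.exp (s / j - 1) := by
    calc s = j * (s / j) := by field_simp
    _ ≤ j * Real.exp (s / j - 1) := by
        exact mul_le_mul_of_nonneg_left h1 hjpos.le
  have h3 : s ^ j ≤ (j * Real.exp (s / j - 1)) ^ j :=
    pow_le_pow_left₀ hs h2 j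
  have h4 : (j * Real.exp (s / j - 1)) ^ j = (j : ℝ) ^ j * Real.exp (s - j) := by
    rw [mul_pow, ← Real.exp_nat_mul]
    congr 2
    field_simp
  calc Real.exp (-s) * s ^ j ≤ Real.exp (-s) * ((j : ℝ) ^ j * Real.exp (s - j)) := by
        apply mul_le_mul_of_nonneg_left _ (Real.exp_pos _).le
        rw [← h4]; exact h3
  _ = Real.exp (-(j : ℝ)) * (j : ℝ) ^ j := by
      rw [← mul_assoc, mul_comm (Real.exp (-s)), mul_assoc, ← Real.exp_add]
      ring_nf

private lemma tendsto_aux :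
    Filter.Tendsto (fun j : ℕ => Real.exp (-(j : ℝ)) * (j : ℝ) ^ j / (Nat.factorial j : ℝ))
      Filter.atTop (𝓝 0) := by
  have hsqrt : Filter.Tendsto (fun j : ℕ => Real.sqrt (2 * j)) Filter.atTop Filter.atTop := by
    apply Filter.Tendsto.comp (f := fun j : ℕ => (2 * j : ℝ)) (g := Real.sqrt)
    · exact Filter.tendsto_atTop_atTop_of_monotone
        (fun a b h => Real.sqrt_le_sqrt h)
        (fun b => ⟨b ^ 2 ⊔ 0, by
          rcases le_total b 0 with hb | hb
          · exact hb.trans (Real.sqrt_nonneg _)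
          · calc b = Real.sqrt (b ^ 2) := by rw [Real.sqrt_sq hb]
            _ ≤ _ := Real.sqrt_le_sqrt le_sup_left⟩)
    · exact (tendsto_natCast_atTop_atTop).const_mul_atTop two_pos
  have hmul : Filter.Tendsto (fun j : ℕ => Stirling.stirlingSeq j * Real.sqrt (2 * j))
      Filter.atTop Filter.atTop :=
    Filter.Tendsto.pos_mul_atTop (by positivity) Stirling.tendsto_stirlingSeq_sqrt_pi hsqrt
  have hinv : Filter.Tendsto (fun j : ℕ => (Stirling.stirlingSeq j * Real.sqrt (2 * j))⁻¹)
      Filter.atTop (𝓝 0) := hmul.inv_tendsto_atTop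
  apply hinv.congr'
  filter_upwards [Filter.eventually_ge_atTop 1] with j hj
  obtain ⟨k, rfl⟩ := Nat.exists_eq_add_of_le hj
  have h1 : 0 < Stirling.stirlingSeq (1 + k) := by
    rw [Nat.add_comm]; exact Stirling.stirlingSeq'_pos k
  set j := 1 + k
  have hjpos : (0 : ℝ) < j := by positivity
  have hfac : (0 : ℝ) < (Nat.factorial j : ℝ) := by positivity
  have hsq : (0 : ℝ) < Real.sqrt (2 * j) := Real.sqrt_pos.mpr (by positivity)
  have hpow : (0 : ℝ) < ((j : ℝ) / Real.exp 1) ^ j := by positivity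
  rw [Stirling.stirlingSeq]
  rw [div_pow, Real.exp_one_pow] at hpow ⊢
  rw [Real.exp_neg]
  field_simp

theorem stmt_19 (c : ℝ) (hc : 0 < c) (p : ℤ) (u : ℤ → ℝ → ℝ)
    (hu : ∀ (n : ℤ) (t : ℝ),
      u n t = if p ≤ n then
        Real.exp (-c * t) * (c * t) ^ (n - p).toNat / (Nat.factorial (n - p).toNat : ℝ)
      else 0) :
    (∀ j : ℕ, 1 ≤ j →
      (⨆ t : Set.Ici (0 : ℝ), |u (p + j) (t : ℝ)|) =
        Real.exp (-(j : ℝ)) * (j : ℝ) ^ j / (Nat.factorial j : ℝ)) ∧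
    Filter.Tendsto (fun j : ℕ => Real.exp (-(j : ℝ)) * (j : ℝ) ^ j / (Nat.factorial j : ℝ))
      Filter.atTop (𝓝 0) ∧
    ∀ ε : ℝ, 0 < ε → ∃ d : ℕ, ∀ n : ℤ, (d : ℤ) < |n - p| →
      ∀ t : ℝ, 0 ≤ t → |u n t| < ε := by
  have huval : ∀ (j : ℕ) (t : ℝ),
      u (p + j) t = Real.exp (-c * t) * (c * t) ^ j / (Nat.factorial j : ℝ) := by
    intro j t
    rw [hu]
    have : (p + (j : ℤ) - p).toNat = j := by omega
    rw [if_pos (by omega), this]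
  -- bound: for t ≥ 0, |u (p+j) t| ≤ e^{-j} j^j / j!
  have hbound : ∀ (j : ℕ), 1 ≤ j → ∀ t : ℝ, 0 ≤ t →
      |u (p + j) t| ≤ Real.exp (-(j : ℝ)) * (j : ℝ) ^ j / (Nat.factorial j : ℝ) := by
    intro j hj t ht
    rw [huval]
    have hct : 0 ≤ c * t := by positivity
    have hnonneg : 0 ≤ Real.exp (-c * t) * (c * t) ^ j / (Nat.factorial j : ℝ) := by positivity
    rw [abs_of_nonneg hnonneg]
    apply div_le_div_of_nonneg_right ?_ (by positivity)
    · have := key_bound j hj (c * t) hct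
      rw [neg_mul]
      exact this
  refine ⟨?_, tendsto_aux, ?_⟩
  · intro j hj
    have hinst : Nonempty (Set.Ici (0 : ℝ)) := ⟨⟨0, Set.self_mem_Ici⟩⟩
    apply le_antisymm
    · apply ciSup_le
      intro ⟨t, ht⟩
      exact hbound j hj t ht
    · have htj : (0 : ℝ) ≤ (j : ℝ) / c := by positivity
      have hle := le_ciSup (f := fun t : Set.Ici (0 : ℝ) => |u (p + j) (t : ℝ)|)
        ⟨Real.exp (-(j : ℝ)) * (j : ℝ) ^ j / (Nat.factorial j : ℝ),
          Set.forall_mem_range.mpr (fun ⟨t, ht⟩ => hbound j hj t ht)⟩ ⟨(j : ℝ) / c, htj⟩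
      refine le_trans ?_ hle
      rw [huval]
      have hcj : c * ((j : ℝ) / c) = (j : ℝ) := by field_simp
      rw [neg_mul, hcj]
      rw [abs_of_nonneg (by positivity)]
  · intro ε hε
    obtain ⟨d, hd⟩ := (Filter.tendsto_atTop'.mp tendsto_aux) (Set.Iio ε)
      (Iio_mem_nhds hε)
    refine ⟨d, ?_⟩
    intro n hn t ht
    rcases lt_or_ge n p with h | h
    · rw [hu, if_neg (by omega)]
      simpa using hε
    · set j := (n - p).toNat with hjdef
      have hnp : n = p + (j : ℤ) := by omega
      have hjd : d ≤ j := by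
        rw [abs_of_nonneg (by omega : (0:ℤ) ≤ n - p)] at hn
        omega
      have hj1 : 1 ≤ j := by
        rw [abs_of_nonneg (by omega : (0:ℤ) ≤ n - p)] at hn
        omega
      calc |u n t| = |u (p + (j : ℤ)) t| := by rw [← hnp]
      _ ≤ Real.exp (-(j : ℝ)) * (j : ℝ) ^ j / (Nat.factorial j : ℝ) := hbound j hj1 t ht
      _ < ε := hd j hjd
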